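/- Let Δ ⊆ ℝ_{≥0}^n be a Newton polyhedron with a loose edge E with endpoints a = (a_1,…,a_n) and b = (b_1,…,b_n). If min(a_i, b_i) = 0 for every i = 1,…,n, then a and b are the only vertices of Δ. -/

import Mathlib

open Finset

def dotp {n : ℕ} (ξ a : Fin n → ℝ) : ℝ := ∑ i, ξ i * a i

def IsNewtonPolyhedron {n : ℕ} (Δ : Set (Fin n → ℝ)) : Prop :=
  ∃ S : Finset (Fin n → ℝ), S.Nonempty ∧ (∀ a ∈ S, ∀ i, ∃ m : ℕ, a i = (m : ℝ)) ∧
    Δ = {x | ∃ y ∈ convexHull ℝ (S : Set (Fin n → ℝ)),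
          ∃ z : Fin n → ℝ, (∀ i, 0 ≤ z i) ∧ x = y + z}

def NPface {n : ℕ} (Δ : Set (Fin n → ℝ)) (ξ : Fin n → ℝ) : Set (Fin n → ℝ) :=
  {a ∈ Δ | ∀ b ∈ Δ, dotp ξ a ≤ dotp ξ b}

def IsFaceOf {n : ℕ} (Δ A : Set (Fin n → ℝ)) : Prop :=
  ∃ ξ : Fin n → ℝ, (∀ i, 0 ≤ ξ i) ∧ A = NPface Δ ξ

noncomputable def npDim {n : ℕ} (A : Set (Fin n → ℝ)) : ℕ :=
  Module.finrank ℝ (vectorSpan ℝ A)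

def IsLooseEdge {n : ℕ} (Δ E : Set (Fin n → ℝ)) : Prop :=
  IsFaceOf Δ E ∧ IsCompact E ∧ npDim E = 1 ∧
    ∀ F, IsFaceOf Δ F → IsCompact F → 2 ≤ npDim F → ¬ E ⊆ F

/-- `v` is a vertex (0-dimensional face) of `Δ`. -/
def IsVertexOf {n : ℕ} (Δ : Set (Fin n → ℝ)) (v : Fin n → ℝ) : Prop :=
  ∃ ξ : Fin n → ℝ, (∀ i, 0 ≤ ξ i) ∧ NPface Δ ξ = {v}

/- ### Auxiliary lemmas -/

lemma dotp_comb {n : ℕ} (ξ x y : Fin n → ℝ) (u v : ℝ) :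
    dotp ξ (u • x + v • y) = u * dotp ξ x + v * dotp ξ y := by
  simp only [dotp, Finset.mul_sum, ← Finset.sum_add_distrib]
  refine Finset.sum_congr rfl fun i _ => ?_
  simp only [Pi.add_apply, Pi.smul_apply, smul_eq_mul]
  ring

lemma dotp_line {n : ℕ} (ξ x y : Fin n → ℝ) (r : ℝ) :
    dotp ξ (x + r • (y - x)) = dotp ξ x + r * (dotp ξ y - dotp ξ x) := by
  have hx : x + r • (y - x) = (1 - r) • x + r • y := by
    funext i
    simp only [Pi.add_apply, Pi.smul_apply, Pi.sub_apply, smul_eq_mul]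
    ring
  rw [hx, dotp_comb]
  ring

lemma dotp_left_comb {n : ℕ} (ξ η x : Fin n → ℝ) (t : ℝ) :
    dotp (fun i => (1 - t) * ξ i + t * η i) x = (1 - t) * dotp ξ x + t * dotp η x := by
  simp only [dotp, Finset.mul_sum, ← Finset.sum_add_distrib]
  refine Finset.sum_congr rfl fun i _ => ?_
  ring

lemma dotp_nonneg' {n : ℕ} {ξ x : Fin n → ℝ} (hξ : ∀ i, 0 ≤ ξ i) (hx : ∀ i, 0 ≤ x i) :
    0 ≤ dotp ξ x :=
  Finset.sum_nonneg fun i _ => mul_nonneg (hξ i) (hx i)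

lemma dotp_add_right {n : ℕ} (ξ x y : Fin n → ℝ) :
    dotp ξ (x + y) = dotp ξ x + dotp ξ y := by
  simp only [dotp, ← Finset.sum_add_distrib]
  refine Finset.sum_congr rfl fun i _ => ?_
  simp [mul_add]

/-- In a Newton polyhedron, every point dominates (for a nonnegative functional)
some point of the generating set `S`. -/
lemma exists_S_le {n : ℕ} {S : Finset (Fin n → ℝ)} (hne : S.Nonempty)
    {ζ : Fin n → ℝ} (hζ : ∀ i, 0 ≤ ζ i) {x : Fin n → ℝ}
    (hx : ∃ y ∈ convexHull ℝ (S : Set (Fin n → ℝ)),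
          ∃ z : Fin n → ℝ, (∀ i, 0 ≤ z i) ∧ x = y + z) :
    ∃ s ∈ S, dotp ζ s ≤ dotp ζ x := by
  obtain ⟨y, hy, z, hz, rfl⟩ := hx
  have hyz : dotp ζ y ≤ dotp ζ (y + z) := by
    have h1 : dotp ζ (y + z) = dotp ζ y + dotp ζ z := by
      simp only [dotp, ← Finset.sum_add_distrib]
      refine Finset.sum_congr rfl fun i _ => ?_
      simp [mul_add]
    have := dotp_nonneg' hζ hz
    linarith
  have hmin : y ∈ {w : Fin n → ℝ | S.inf' hne (fun s => dotp ζ s) ≤ dotp ζ w} := by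
    refine convexHull_min ?_ ?_ hy
    · intro s hs
      exact Finset.inf'_le (fun s : Fin n → ℝ => dotp ζ s) hs
    · intro p hp q hq u v hu hv huv
      have : dotp ζ (u • p + v • q) = u * dotp ζ p + v * dotp ζ q := dotp_comb ζ p q u v
      simp only [Set.mem_setOf_eq] at hp hq ⊢
      rw [this]
      have h1 : u * (S.inf' hne fun s => dotp ζ s) ≤ u * dotp ζ p :=
        mul_le_mul_of_nonneg_left hp hu
      have h2 : v * (S.inf' hne fun s => dotp ζ s) ≤ v * dotp ζ q :=
        mul_le_mul_of_nonneg_left hq hv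
      have h3 : (S.inf' hne fun s => dotp ζ s)
          = u * (S.inf' hne fun s => dotp ζ s) + v * (S.inf' hne fun s => dotp ζ s) := by
        rw [← add_mul, huv, one_mul]
      linarith
  obtain ⟨s, hs, hseq⟩ := Finset.exists_mem_eq_inf' hne (fun s : Fin n → ℝ => dotp ζ s)
  refine ⟨s, hs, ?_⟩
  simp only [Set.mem_setOf_eq] at hmin
  rw [← hseq]
  exact le_trans hmin hyz

set_option maxHeartbeats 1000000 in
/-- if a loose edge has endpoints `a`, `b` with `min (a i) (b i) = 0`
for every `i`, then `a` and `b` are the only vertices of `Δ`. -/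
theorem loose_edge_only_vertices {n : ℕ} (Δ E : Set (Fin n → ℝ))
    (hΔ : IsNewtonPolyhedron Δ) (hE : IsLooseEdge Δ E)
    (a b : Fin n → ℝ) (hab : a ≠ b) (hseg : E = segment ℝ a b)
    (hmin : ∀ i, min (a i) (b i) = 0) :
    ∀ v, IsVertexOf Δ v → v = a ∨ v = b := by
  classical
  intro v hv
  by_contra hcon
  push_neg at hcon
  obtain ⟨hva, hvb⟩ := hcon
  obtain ⟨S, hSne, hSnat, hΔeq⟩ := hΔ
  obtain ⟨⟨ξ, hξ0, hEface⟩, _, _, hloose⟩ := hE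
  obtain ⟨η, hη0, hvert⟩ := hv
  -- basic positivity facts
  have ha0 : ∀ i, 0 ≤ a i := fun i => by
    have h := min_le_left (a i) (b i); rw [hmin i] at h; exact h
  have hb0 : ∀ i, 0 ≤ b i := fun i => by
    have h := min_le_right (a i) (b i); rw [hmin i] at h; exact h
  have hab0 : ∀ i, 0 < b i → a i = 0 := fun i hbi => by
    rcases min_choice (a i) (b i) with h | h
    · rw [hmin i] at h; exact h.symm
    · rw [hmin i] at h; exact absurd h.symm (ne_of_gt hbi)
  -- E is contained in Δ, and a, b belong to E
  have hEsub : E ⊆ Δ := by rw [hEface]; exact fun x hx => hx.1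
  have haE : a ∈ E := by rw [hseg]; exact left_mem_segment ℝ a b
  have hbE : b ∈ E := by rw [hseg]; exact right_mem_segment ℝ a b
  have haΔ : a ∈ Δ := hEsub haE
  have hbΔ : b ∈ Δ := hEsub hbE
  have haNP : a ∈ NPface Δ ξ := by rw [← hEface]; exact haE
  have hbNP : b ∈ NPface Δ ξ := by rw [← hEface]; exact hbE
  have haMin : ∀ x ∈ Δ, dotp ξ a ≤ dotp ξ x := haNP.2
  have hξab : dotp ξ a = dotp ξ b := le_antisymm (haNP.2 b hbΔ) (hbNP.2 a haΔ)
  -- every point of Δ has nonnegative coordinates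
  have hSorth : ∀ s ∈ S, ∀ i, (0:ℝ) ≤ s i := by
    intro s hs i
    obtain ⟨m, hm⟩ := hSnat s hs i
    rw [hm]; exact Nat.cast_nonneg m
  have horth : ∀ x ∈ Δ, ∀ i, (0:ℝ) ≤ x i := by
    intro x hx i
    rw [hΔeq] at hx
    obtain ⟨y, hy, z, hz, rfl⟩ := hx
    have hy' : y ∈ {w : Fin n → ℝ | ∀ i, 0 ≤ w i} := by
      refine convexHull_min ?_ ?_ hy
      · intro s hs j; exact hSorth s hs j
      · intro p hp q hq u w hu hw huw j
        have := hp j; have := hq j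
        simp only [Pi.add_apply, Pi.smul_apply, smul_eq_mul]
        nlinarith [hp j, hq j]
    have := hy' i
    have := hz i
    simp only [Pi.add_apply]
    linarith
  have hSsubΔ : ∀ s ∈ S, s ∈ Δ := by
    intro s hs
    rw [hΔeq]
    exact ⟨s, subset_convexHull ℝ _ hs, 0, fun i => le_refl 0, (add_zero s).symm⟩
  -- ξ is strictly positive (else E would be unbounded)
  have hξpos : ∀ j, 0 < ξ j := by
    intro j
    rcases lt_or_eq_of_le (hξ0 j) with h | h
    · exact h
    exfalso
    set K : ℝ := a j + b j + 1 with hK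
    set p : Fin n → ℝ := fun i => a i + (if i = j then K else 0) with hpdef
    have hpΔ : p ∈ Δ := by
      have haΔ' := haΔ
      rw [hΔeq] at haΔ' ⊢
      obtain ⟨y, hy, z, hz, hyz⟩ := haΔ'
      refine ⟨y, hy, fun i => z i + (if i = j then K else 0), fun i => ?_, ?_⟩
      · dsimp only
        have := hz i
        split_ifs with hij
        · have : 0 ≤ K := by simp only [hK]; nlinarith [ha0 j, hb0 j]
          linarith [hz i]
        · simpa using hz i
      · funext i
        have := congrFun hyz i
        simp only [hpdef, Pi.add_apply] at this ⊢
        rw [this]; ring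
    have hpval : dotp ξ p = dotp ξ a := by
      simp only [dotp, hpdef]
      refine Finset.sum_congr rfl fun i _ => ?_
      split_ifs with hij
      · subst hij; rw [← h]; ring
      · ring
    have hpE : p ∈ E := by
      rw [hEface]
      refine ⟨hpΔ, fun y hy => ?_⟩
      rw [hpval]; exact haMin y hy
    rw [hseg] at hpE
    obtain ⟨u, w, hu, hw, huw, hpe⟩ := hpE
    have hpj : p j = a j + K := by simp [hpdef]
    have hj := congrFun hpe j
    rw [hpj] at hj
    simp only [Pi.add_apply, Pi.smul_apply, smul_eq_mul] at hj
    have hsum1 : u * a j + w * a j = a j := by rw [← add_mul, huw, one_mul]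
    have hsum2 : u * b j + w * b j = b j := by rw [← add_mul, huw, one_mul]
    have h1 : u * a j ≤ a j := by linarith [mul_nonneg hw (ha0 j)]
    have h2 : w * b j ≤ b j := by linarith [mul_nonneg hu (hb0 j)]
    rw [hK] at hj
    linarith [ha0 j]
  -- the vertex v
  have hvNP : v ∈ NPface Δ η := by rw [hvert]; rfl
  have hvΔ : v ∈ Δ := hvNP.1
  have hvmin : ∀ x ∈ Δ, dotp η v ≤ dotp η x := hvNP.2
  have hAv : dotp η v < dotp η a := by
    rcases lt_or_eq_of_le (hvmin a haΔ) with h | h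
    · exact h
    exfalso
    have : a ∈ NPface Δ η := ⟨haΔ, fun x hx => h ▸ hvmin x hx⟩
    rw [hvert] at this
    exact hva (Set.mem_singleton_iff.1 this).symm
  have hBv : dotp η v < dotp η b := by
    rcases lt_or_eq_of_le (hvmin b hbΔ) with h | h
    · exact h
    exfalso
    have : b ∈ NPface Δ η := ⟨hbΔ, fun x hx => h ▸ hvmin x hx⟩
    rw [hvert] at this
    exact hvb (Set.mem_singleton_iff.1 this).symm
  have hV0 : 0 ≤ dotp η v := dotp_nonneg' hη0 (horth v hvΔ)
  set A : ℝ := dotp η a with hA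
  set B : ℝ := dotp η b with hB
  have hApos : 0 < A := lt_of_le_of_lt hV0 hAv
  have hBpos : 0 < B := lt_of_le_of_lt hV0 hBv
  -- the rescaled functional η̃
  set η' : Fin n → ℝ := fun i => if 0 < b i then η i / B else η i / A with hη'
  have hη'0 : ∀ i, 0 ≤ η' i := by
    intro i
    simp only [hη']
    split_ifs
    · exact div_nonneg (hη0 i) hBpos.le
    · exact div_nonneg (hη0 i) hApos.le
  have hη'b : dotp η' b = 1 := by
    have : ∀ i ∈ Finset.univ, η' i * b i = (η i * b i) / B := by
      intro i _
      simp only [hη']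
      split_ifs with hbi
      · ring
      · have : b i = 0 := le_antisymm (not_lt.1 hbi) (hb0 i)
        rw [this]; ring
    simp only [dotp]
    rw [Finset.sum_congr rfl this, ← Finset.sum_div]
    exact div_self (ne_of_gt hBpos)
  have hη'a : dotp η' a = 1 := by
    have : ∀ i ∈ Finset.univ, η' i * a i = (η i * a i) / A := by
      intro i _
      simp only [hη']
      split_ifs with hbi
      · rw [hab0 i hbi]; ring
      · ring
    simp only [dotp]
    rw [Finset.sum_congr rfl this, ← Finset.sum_div]
    exact div_self (ne_of_gt hApos)
  have hμpos : 0 < min A B := lt_min hApos hBpos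
  have hη'v : dotp η' v < 1 := by
    have hterm : ∀ i ∈ Finset.univ, η' i * v i ≤ (η i * v i) / min A B := by
      intro i _
      have hvnn := horth v hvΔ i
      have hle : η' i ≤ η i / min A B := by
        simp only [hη']
        split_ifs
        · exact div_le_div_of_nonneg_left (hη0 i) hμpos (min_le_right A B)
        · exact div_le_div_of_nonneg_left (hη0 i) hμpos (min_le_left A B)
      calc η' i * v i ≤ (η i / min A B) * v i := mul_le_mul_of_nonneg_right hle hvnn
        _ = (η i * v i) / min A B := by ring
    have h1 : dotp η' v ≤ dotp η v / min A B := by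
      simp only [dotp]
      calc ∑ i, η' i * v i ≤ ∑ i, (η i * v i) / min A B := Finset.sum_le_sum hterm
        _ = (∑ i, η i * v i) / min A B := by rw [← Finset.sum_div]
    have h2 : dotp η v / min A B < 1 := by
      rw [div_lt_one hμpos]
      exact lt_min hAv hBv
    linarith
  -- the path of functionals
  set ζ : ℝ → (Fin n → ℝ) := fun t => fun i => (1 - t) * ξ i + t * η' i with hζ
  have hζval : ∀ t x, dotp (ζ t) x = (1 - t) * dotp ξ x + t * dotp η' x := by
    intro t x
    exact dotp_left_comb ξ η' x t
  -- the critical parameter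
  set T : Finset (Fin n → ℝ) := S.filter (fun s => 0 < 1 - dotp η' s) with hT
  have hTne : T.Nonempty := by
    obtain ⟨s, hs, hle⟩ := exists_S_le hSne hη'0 (by rw [hΔeq] at hvΔ; exact hvΔ)
    exact ⟨s, Finset.mem_filter.2 ⟨hs, by linarith⟩⟩
  set r : (Fin n → ℝ) → ℝ :=
    fun s => (-(dotp ξ a - dotp ξ s)) / ((1 - dotp η' s) - (dotp ξ a - dotp ξ s)) with hr
  have hpS : ∀ s ∈ S, dotp ξ a - dotp ξ s ≤ 0 := by
    intro s hs
    have := haMin s (hSsubΔ s hs)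
    linarith
  have hrT : ∀ s ∈ T, 0 ≤ r s ∧ r s < 1 := by
    intro s hsT
    obtain ⟨hsS, hq⟩ := Finset.mem_filter.1 hsT
    have hp := hpS s hsS
    have hd : 0 < (1 - dotp η' s) - (dotp ξ a - dotp ξ s) := by linarith
    constructor
    · exact div_nonneg (by linarith) hd.le
    · rw [hr, div_lt_one hd]; linarith
  set t₀ : ℝ := T.inf' hTne r with ht₀
  obtain ⟨sst, hsstT, hsst⟩ := Finset.exists_mem_eq_inf' hTne r
  have hsstS : sst ∈ S := (Finset.mem_filter.1 hsstT).1
  have hqsst : 0 < 1 - dotp η' sst := (Finset.mem_filter.1 hsstT).2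
  have ht0nn : 0 ≤ t₀ := Finset.le_inf' hTne r fun s hs => (hrT s hs).1
  have ht0lt : t₀ < 1 := by
    rw [ht₀, hsst]
    exact (hrT sst hsstT).2
  have hζnn : ∀ i, 0 ≤ ζ t₀ i := by
    intro i
    have := hξpos i
    have := hη'0 i
    simp only [hζ]
    nlinarith
  have hζpos : ∀ i, 0 < ζ t₀ i := by
    intro i
    have := hξpos i
    have := hη'0 i
    simp only [hζ]
    nlinarith
  -- a minimizes ζ t₀ over S
  have hC1 : ∀ s ∈ S, dotp (ζ t₀) a ≤ dotp (ζ t₀) s := by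
    intro s hs
    rw [hζval, hζval, hη'a]
    have hp := hpS s hs
    by_cases hsT : s ∈ T
    · have hq : 0 < 1 - dotp η' s := (Finset.mem_filter.1 hsT).2
      have hd : 0 < (1 - dotp η' s) - (dotp ξ a - dotp ξ s) := by linarith
      have hle : t₀ ≤ r s := Finset.inf'_le r hsT
      have hmul : t₀ * ((1 - dotp η' s) - (dotp ξ a - dotp ξ s))
          ≤ -(dotp ξ a - dotp ξ s) := by
        rw [hr] at hle
        exact (le_div_iff₀ hd).1 hle
      nlinarith
    · have hq : 1 - dotp η' s ≤ 0 := by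
        have := Finset.mem_filter.not.1 hsT
        push_neg at this
        exact this hs
      nlinarith [mul_nonneg ht0nn (neg_nonneg.2 hq),
        mul_nonneg (by linarith : (0:ℝ) ≤ 1 - t₀) (neg_nonneg.2 hp)]
  -- sst achieves equality at t₀
  have hC2 : dotp (ζ t₀) sst = dotp (ζ t₀) a := by
    rw [hζval, hζval, hη'a]
    have hp := hpS sst hsstS
    have hd : 0 < (1 - dotp η' sst) - (dotp ξ a - dotp ξ sst) := by linarith
    have hmul : t₀ * ((1 - dotp η' sst) - (dotp ξ a - dotp ξ sst))
        = -(dotp ξ a - dotp ξ sst) := by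
      rw [ht₀, hsst, hr]
      exact div_mul_cancel₀ _ (ne_of_gt hd)
    nlinarith [hmul]
  -- a is a global minimizer of ζ t₀ on Δ
  have haF : a ∈ NPface Δ (ζ t₀) := by
    refine ⟨haΔ, fun x hx => ?_⟩
    obtain ⟨s, hs, hle⟩ := exists_S_le hSne hζnn (by rw [hΔeq] at hx; exact hx)
    exact le_trans (hC1 s hs) hle
  have hζab : dotp (ζ t₀) b = dotp (ζ t₀) a := by
    rw [hζval, hζval, hη'a, hη'b, hξab]
  have hbF : b ∈ NPface Δ (ζ t₀) := by
    refine ⟨hbΔ, fun x hx => ?_⟩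
    rw [hζab]
    exact haF.2 x hx
  have hsstF : sst ∈ NPface Δ (ζ t₀) := by
    refine ⟨hSsubΔ sst hsstS, fun x hx => ?_⟩
    rw [hC2]
    exact haF.2 x hx
  -- sst is not on the line through a and b
  have hline : ∀ rr : ℝ, sst ≠ a + rr • (b - a) := by
    intro rr h
    have := dotp_line η' a b rr
    rw [← h, hη'a, hη'b] at this
    rw [this] at hqsst
    simp at hqsst
  -- the face F
  set F : Set (Fin n → ℝ) := NPface Δ (ζ t₀) with hF
  have hFface : IsFaceOf Δ F := ⟨ζ t₀, hζnn, rfl⟩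
  -- F is compact
  have hFeq : F = (convexHull ℝ (S : Set (Fin n → ℝ)))
      ∩ {x | dotp (ζ t₀) x ≤ dotp (ζ t₀) a} := by
    apply Set.Subset.antisymm
    · intro x hx
      obtain ⟨hxΔ, hxmin⟩ := hx
      have hxΔ' := hxΔ
      rw [hΔeq] at hxΔ'
      obtain ⟨y, hy, z, hz, hxyz⟩ := hxΔ'
      have hyΔ : y ∈ Δ := by
        rw [hΔeq]
        exact ⟨y, hy, 0, fun i => le_refl 0, (add_zero y).symm⟩
      have h1 : dotp (ζ t₀) x = dotp (ζ t₀) y + dotp (ζ t₀) z := by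
        rw [hxyz]; exact dotp_add_right _ _ _
      have h2 : dotp (ζ t₀) x ≤ dotp (ζ t₀) y := hxmin y hyΔ
      have h3 : dotp (ζ t₀) z ≤ 0 := by linarith
      have h4 : dotp (ζ t₀) z = 0 :=
        le_antisymm h3 (dotp_nonneg' hζnn hz)
      have h5 : ∀ i ∈ Finset.univ, ζ t₀ i * z i = 0 :=
        (Finset.sum_eq_zero_iff_of_nonneg
          (fun i _ => mul_nonneg (hζnn i) (hz i))).1 h4
      have hz0 : z = 0 := by
        funext i
        have := h5 i (Finset.mem_univ i)
        have hpos := hζpos i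
        simp only [Pi.zero_apply]
        rcases mul_eq_zero.1 this with h | h
        · exact absurd h (ne_of_gt hpos)
        · exact h
      rw [hz0, add_zero] at hxyz
      exact ⟨hxyz ▸ hy, hxmin a haΔ⟩
    · intro x hx
      obtain ⟨hxhull, hxle⟩ := hx
      have hxΔ : x ∈ Δ := by
        rw [hΔeq]
        exact ⟨x, hxhull, 0, fun i => le_refl 0, (add_zero x).symm⟩
      exact ⟨hxΔ, fun y hy => le_trans hxle (haF.2 y hy)⟩
  have hFcompact : IsCompact F := by
    rw [hFeq]
    refine IsCompact.inter_right (S.finite_toSet.isCompact_convexHull (𝕜 := ℝ)) ?_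
    have hcont : Continuous (fun x : Fin n → ℝ => dotp (ζ t₀) x) := by
      simp only [dotp]
      exact continuous_finset_sum _ fun i _ => continuous_const.mul (continuous_apply i)
    exact isClosed_le hcont continuous_const
  -- F has dimension at least 2
  have hdim : 2 ≤ npDim F := by
    have h1 : b - a ∈ vectorSpan ℝ F := by
      rw [← vsub_eq_sub]
      exact vsub_mem_vectorSpan ℝ hbF haF
    have h2 : sst - a ∈ vectorSpan ℝ F := by
      rw [← vsub_eq_sub]
      exact vsub_mem_vectorSpan ℝ hsstF haF
    have hli : LinearIndependent ℝ ![sst - a, b - a] := by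
      rw [linearIndependent_fin2]
      refine ⟨sub_ne_zero.2 (Ne.symm hab), fun rr h => ?_⟩
      simp only [Matrix.cons_val_one, Matrix.head_cons, Matrix.cons_val_zero] at h
      apply hline rr
      rw [h]
      abel
    have hle : Submodule.span ℝ (Set.range ![sst - a, b - a]) ≤ vectorSpan ℝ F := by
      rw [Submodule.span_le]
      rintro x ⟨i, rfl⟩
      fin_cases i
      · simpa using h2
      · simpa using h1
    have hcard := finrank_span_eq_card hli
    have hmono := Submodule.finrank_mono hle
    rw [hcard] at hmono
    simpa [npDim] using hmono
  -- E is contained in F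
  have hEF : E ⊆ F := by
    rw [hseg]
    rintro x ⟨u, w, hu, hw, huw, rfl⟩
    have hxE : u • a + w • b ∈ E := by
      rw [hseg]; exact ⟨u, w, hu, hw, huw, rfl⟩
    refine ⟨hEsub hxE, fun y hy => ?_⟩
    have : dotp (ζ t₀) (u • a + w • b)
        = u * dotp (ζ t₀) a + w * dotp (ζ t₀) b := dotp_comb _ _ _ _ _
    rw [this, hζab]
    have : u * dotp (ζ t₀) a + w * dotp (ζ t₀) a = dotp (ζ t₀) a := by
      rw [← add_mul, huw, one_mul]
    rw [this]
    exact haF.2 y hy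
  exact hloose F hFface hFcompact hdim hEF
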